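/- Any finite product of matrices of the form R_{Z_i} and L_{Z_i} with real parameters Z_i has strictly positive entries on the main diagonal and nonpositive entries on the antidiagonal; consequently its trace is at least 2. -/

import Mathlib

open Matrix Real

noncomputable def RZ (Z : ℝ) : Matrix (Fin 2) (Fin 2) ℝ :=
  !![Real.exp (-Z / 2), -Real.exp (Z / 2); 0, Real.exp (Z / 2)]

noncomputable def LZ (Z : ℝ) : Matrix (Fin 2) (Fin 2) ℝ :=
  !![Real.exp (-Z / 2), 0; -Real.exp (-Z / 2), Real.exp (Z / 2)]

private def SgnInv (M : Matrix (Fin 2) (Fin 2) ℝ) : Prop :=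
  0 < M 0 0 ∧ 0 < M 1 1 ∧ M 0 1 ≤ 0 ∧ M 1 0 ≤ 0 ∧ M 0 0 * M 1 1 - M 0 1 * M 1 0 = 1

private lemma inv_RZ (z : ℝ) : SgnInv (RZ z) := by
  have h1 := Real.exp_pos (-z / 2)
  have h2 := Real.exp_pos (z / 2)
  have h3 : Real.exp (-z / 2) * Real.exp (z / 2) = 1 := by
    rw [← Real.exp_add]; ring_nf; exact Real.exp_zero
  refine ⟨?_, ?_, ?_, ?_, ?_⟩ <;> simp [RZ] <;> nlinarith

private lemma inv_LZ (z : ℝ) : SgnInv (LZ z) := by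
  have h1 := Real.exp_pos (-z / 2)
  have h2 := Real.exp_pos (z / 2)
  have h3 : Real.exp (-z / 2) * Real.exp (z / 2) = 1 := by
    rw [← Real.exp_add]; ring_nf; exact Real.exp_zero
  refine ⟨?_, ?_, ?_, ?_, ?_⟩ <;> simp [LZ] <;> nlinarith

private lemma inv_mul {A B : Matrix (Fin 2) (Fin 2) ℝ} (hA : SgnInv A) (hB : SgnInv B) :
    SgnInv (A * B) := by
  obtain ⟨a1, a2, a3, a4, a5⟩ := hA
  obtain ⟨b1, b2, b3, b4, b5⟩ := hB
  refine ⟨?_, ?_, ?_, ?_, ?_⟩ <;>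
    simp only [Matrix.mul_apply, Fin.sum_univ_two] <;> nlinarith

private lemma inv_prod (l : List (Matrix (Fin 2) (Fin 2) ℝ)) (hne : l ≠ [])
    (hmem : ∀ A ∈ l, ∃ z : ℝ, A = RZ z ∨ A = LZ z) : SgnInv l.prod := by
  induction l with
  | nil => exact absurd rfl hne
  | cons A t ih =>
    obtain ⟨z, hz⟩ := hmem A List.mem_cons_self
    have hA : SgnInv A := by
      rcases hz with h | h
      · rw [h]; exact inv_RZ z
      · rw [h]; exact inv_LZ z
    rcases t.eq_nil_or_concat with h | _
    · subst h; simpa using hA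
    · cases t with
      | nil => simpa using hA
      | cons B s =>
        rw [List.prod_cons]
        exact inv_mul hA (ih (by simp) (fun M hM => hmem M (List.mem_cons_of_mem _ hM)))

theorem product_RL_sign_structure (l : List (Matrix (Fin 2) (Fin 2) ℝ))
    (hne : l ≠ [])
    (hmem : ∀ A ∈ l, ∃ z : ℝ, A = RZ z ∨ A = LZ z) :
    0 < l.prod 0 0 ∧ 0 < l.prod 1 1 ∧ l.prod 0 1 ≤ 0 ∧ l.prod 1 0 ≤ 0 ∧
      2 ≤ l.prod.trace := by
  obtain ⟨h1, h2, h3, h4, h5⟩ := inv_prod l hne hmem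
  refine ⟨h1, h2, h3, h4, ?_⟩
  rw [Matrix.trace_fin_two]
  nlinarith [sq_nonneg (l.prod 0 0 - l.prod 1 1), mul_nonneg (neg_nonneg.2 h3) (neg_nonneg.2 h4)]
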